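/- Suppose a folded ribbon 3-stick unknot with ribbon linking number ±1 has knot diagram a non-degenerate triangle of perimeter 1 with interior angles α₁, α₂, α₃, and the ribbon width w satisfies the non-overlap conditions on each edge (each edge length is at least (w/2) times the sum of the tangents of half the adjacent angles). Then w ≤ 1/√3, with the bound attained only when the triangle is equilateral. -/

import Mathlib

/-- A folded ribbon 3-stick unknot whose diagram is a non-degenerate triangle of
perimeter 1 with interior angles `α₁, α₂, α₃`, whose width `w` satisfies the
non-overlap constraint on each edge, has `w ≤ 1/√3`; the bound is attained only
when the triangle is equilateral. -/
private lemma aux_sq_ge (t₁ t₂ t₃ : ℝ) (h : t₁ * t₂ + t₂ * t₃ + t₃ * t₁ = 1) :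
    3 ≤ (t₁ + t₂ + t₃) ^ 2 := by
  nlinarith [sq_nonneg (t₁ - t₂), sq_nonneg (t₂ - t₃), sq_nonneg (t₃ - t₁)]

private lemma aux_eq_case (t₁ t₂ t₃ : ℝ) (h : t₁ * t₂ + t₂ * t₃ + t₃ * t₁ = 1)
    (heq : (t₁ + t₂ + t₃) ^ 2 = 3) : t₁ = t₂ ∧ t₂ = t₃ := by
  constructor <;>
  nlinarith [sq_nonneg (t₁ - t₂), sq_nonneg (t₂ - t₃), sq_nonneg (t₃ - t₁)]

theorem width_le_inv_sqrt_three (a b c w α₁ α₂ α₃ : ℝ) (hw : 0 < w)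
    (h₁ : 0 < α₁ ∧ α₁ < Real.pi) (h₂ : 0 < α₂ ∧ α₂ < Real.pi)
    (h₃ : 0 < α₃ ∧ α₃ < Real.pi) (hangles : α₁ + α₂ + α₃ = Real.pi)
    (hperim : a + b + c = 1)
    (hx : w / 2 * (Real.tan (α₁ / 2) + Real.tan (α₂ / 2)) ≤ a)
    (hy : w / 2 * (Real.tan (α₂ / 2) + Real.tan (α₃ / 2)) ≤ b)
    (hz : w / 2 * (Real.tan (α₃ / 2) + Real.tan (α₁ / 2)) ≤ c) :
    w ≤ 1 / Real.sqrt 3 ∧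
      (w = 1 / Real.sqrt 3 →
        α₁ = Real.pi / 3 ∧ α₂ = Real.pi / 3 ∧ α₃ = Real.pi / 3 ∧
          a = b ∧ b = c) := by
  obtain ⟨h₁l, h₁r⟩ := h₁
  obtain ⟨h₂l, h₂r⟩ := h₂
  obtain ⟨h₃l, h₃r⟩ := h₃
  obtain ⟨x, hxdef⟩ : ∃ u, u = α₁ / 2 := ⟨_, rfl⟩
  obtain ⟨y, hydef⟩ : ∃ u, u = α₂ / 2 := ⟨_, rfl⟩
  obtain ⟨z, hzdef⟩ : ∃ u, u = α₃ / 2 := ⟨_, rfl⟩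
  rw [← hxdef, ← hydef] at hx
  rw [← hydef, ← hzdef] at hy
  rw [← hzdef, ← hxdef] at hz
  have hx1 : 0 < x := by rw [hxdef]; positivity
  have hy1 : 0 < y := by rw [hydef]; positivity
  have hz1 : 0 < z := by rw [hzdef]; positivity
  have hsum : x + y + z = Real.pi / 2 := by
    rw [hxdef, hydef, hzdef]; linarith
  have hx2 : x < Real.pi / 2 := by rw [hxdef]; linarith
  have hy2 : y < Real.pi / 2 := by rw [hydef]; linarith
  have hz2 : z < Real.pi / 2 := by rw [hzdef]; linarith
  have hp1 : 0 < Real.tan x := Real.tan_pos_of_pos_of_lt_pi_div_two hx1 hx2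
  have hp2 : 0 < Real.tan y := Real.tan_pos_of_pos_of_lt_pi_div_two hy1 hy2
  have hp3 : 0 < Real.tan z := Real.tan_pos_of_pos_of_lt_pi_div_two hz1 hz2
  have hcx : 0 < Real.cos x := Real.cos_pos_of_mem_Ioo ⟨by linarith, hx2⟩
  have hcy : 0 < Real.cos y := Real.cos_pos_of_mem_Ioo ⟨by linarith, hy2⟩
  have hcz : 0 < Real.cos z := Real.cos_pos_of_mem_Ioo ⟨by linarith, hz2⟩
  have hzeq : z = Real.pi / 2 - (x + y) := by linarith
  have hsz : Real.sin z = Real.cos x * Real.cos y - Real.sin x * Real.sin y := by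
    rw [hzeq, Real.sin_pi_div_two_sub, Real.cos_add]
  have hcz' : Real.cos z = Real.sin x * Real.cos y + Real.cos x * Real.sin y := by
    rw [hzeq, Real.cos_pi_div_two_sub, Real.sin_add]
  have key : Real.sin x * Real.sin y * Real.cos z + Real.sin y * Real.sin z * Real.cos x
      + Real.sin z * Real.sin x * Real.cos y = Real.cos x * Real.cos y * Real.cos z := by
    rw [hsz, hcz']; ring
  have hiden : Real.tan x * Real.tan y + Real.tan y * Real.tan z
      + Real.tan z * Real.tan x = 1 := by
    rw [Real.tan_eq_sin_div_cos, Real.tan_eq_sin_div_cos, Real.tan_eq_sin_div_cos]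
    field_simp
    linear_combination key
  -- make the tangents opaque
  obtain ⟨t₁, ht1⟩ : ∃ t, Real.tan x = t := ⟨_, rfl⟩
  obtain ⟨t₂, ht2⟩ : ∃ t, Real.tan y = t := ⟨_, rfl⟩
  obtain ⟨t₃, ht3⟩ : ∃ t, Real.tan z = t := ⟨_, rfl⟩
  simp only [ht1, ht2, ht3] at hiden hp1 hp2 hp3 hx hy hz
  have hS2 : 3 ≤ (t₁ + t₂ + t₃) ^ 2 := aux_sq_ge t₁ t₂ t₃ hiden
  have hSpos : 0 < t₁ + t₂ + t₃ := by linarith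
  have hsqrt3 : Real.sqrt 3 ≤ t₁ + t₂ + t₃ := by
    have := Real.sqrt_le_sqrt hS2
    rwa [Real.sqrt_sq hSpos.le] at this
  have hwS : w * (t₁ + t₂ + t₃) ≤ 1 := by nlinarith [hx, hy, hz, hperim]
  have hs3pos : (0:ℝ) < Real.sqrt 3 := by positivity
  have hmain : w ≤ 1 / Real.sqrt 3 := by
    rw [le_div_iff₀ hs3pos]
    calc w * Real.sqrt 3 ≤ w * (t₁ + t₂ + t₃) := mul_le_mul_of_nonneg_left hsqrt3 hw.le
      _ ≤ 1 := hwS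
  refine ⟨hmain, fun hweq => ?_⟩
  have hSle : t₁ + t₂ + t₃ ≤ Real.sqrt 3 := by
    by_contra h
    push_neg at h
    have h1 : 1 < w * (t₁ + t₂ + t₃) := by
      rw [hweq]
      calc (1:ℝ) = 1 / Real.sqrt 3 * Real.sqrt 3 := by field_simp
        _ < 1 / Real.sqrt 3 * (t₁ + t₂ + t₃) := by
            apply mul_lt_mul_of_pos_left h; positivity
    linarith only [h1, hwS]
  have hSeq : t₁ + t₂ + t₃ = Real.sqrt 3 := le_antisymm hSle hsqrt3
  have hS2eq : (t₁ + t₂ + t₃) ^ 2 = 3 := by rw [hSeq, Real.sq_sqrt]; norm_num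
  obtain ⟨h12, h23⟩ := aux_eq_case t₁ t₂ t₃ hiden hS2eq
  have hxy : x = y := Real.injOn_tan
    (Set.mem_Ioo.mpr ⟨by linarith, hx2⟩) (Set.mem_Ioo.mpr ⟨by linarith, hy2⟩)
    (by rw [ht1, ht2]; exact h12)
  have hyz : y = z := Real.injOn_tan
    (Set.mem_Ioo.mpr ⟨by linarith, hy2⟩) (Set.mem_Ioo.mpr ⟨by linarith, hz2⟩)
    (by rw [ht2, ht3]; exact h23)
  have hx6 : x = Real.pi / 6 := by linarith only [hxy, hyz, hsum]
  have hα₁ : α₁ = Real.pi / 3 := by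
    rw [hxdef] at hx6; linarith only [hx6]
  have hα₂ : α₂ = Real.pi / 3 := by
    have h6 : y = Real.pi / 6 := by rw [← hxy]; exact hx6
    rw [hydef] at h6; linarith only [h6]
  have hα₃ : α₃ = Real.pi / 3 := by linarith only [hangles, hα₁, hα₂]
  have hwS1 : w * (t₁ + t₂ + t₃) = 1 := by
    rw [hweq, hSeq, one_div, inv_mul_cancel₀ hs3pos.ne']
  have hsum3 : 3 * (w * t₁) = 1 := by
    linear_combination hwS1 + 2 * w * h12 + w * h23
  have e1 : w / 2 * (t₁ + t₂) = w * t₁ := by linear_combination (-(w / 2)) * h12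
  have e2 : w / 2 * (t₂ + t₃) = w * t₁ := by linear_combination (-w) * h12 + (-(w / 2)) * h23
  have e3 : w / 2 * (t₃ + t₁) = w * t₁ := by
    linear_combination (-(w / 2)) * h12 + (-(w / 2)) * h23
  rw [e1] at hx
  rw [e2] at hy
  rw [e3] at hz
  have ha : a = w * t₁ := by linarith only [hx, hy, hz, hperim, hsum3]
  have hb : b = w * t₁ := by linarith only [hx, hy, hz, hperim, hsum3]
  have hc : c = w * t₁ := by linarith only [hx, hy, hz, hperim, hsum3]
  exact ⟨hα₁, hα₂, hα₃, by rw [ha, hb], by rw [hb, hc]⟩
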